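/- arXiv:1802.07604 — 2 statements merged into one kernel-verified Lean document; each statement's English description precedes it below -/
import Mathlib

section
/- Let 0 < ρ ≤ 1 and define C(ρ) = sup{ δ ∈ (0, 1/2) : (4+δ)·10^(2δ) / log(1/(2δ)) < ρ }. Then C(ρ) > e^{-1-4/ρ}. -/
set_option maxHeartbeats 1000000


theorem stmt_1 (ρ : ℝ) (hρ0 : 0 < ρ) (hρ1 : ρ ≤ 1) :
    Real.exp (-1 - 4/ρ) <
      sSup {δ : ℝ | δ ∈ Set.Ioo (0 : ℝ) (1/2) ∧
        (4 + δ) * (10 : ℝ) ^ (2 * δ) / Real.log (1 / (2 * δ)) < ρ} := by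
  have ha_pos : 0 < Real.exp (-1 - 4/ρ) := Real.exp_pos _
  set a := Real.exp (-1 - 4/ρ) with ha_def
  set d := 1.01 * a with hd_def
  have hd_pos : 0 < d := by positivity
  -- exp(1 - 1/ρ) ≤ ρ
  have h1 : Real.exp (1 - 1/ρ) ≤ ρ := by
    have h2 : 1/ρ ≤ Real.exp (1/ρ - 1) := by
      have := Real.add_one_le_exp (1/ρ - 1); linarith
    have h3 : Real.exp (1 - 1/ρ) * Real.exp (1/ρ - 1) = 1 := by
      rw [← Real.exp_add]; norm_num
    have h4 : Real.exp (1 - 1/ρ) * (1/ρ) ≤ 1 := by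
      calc Real.exp (1 - 1/ρ) * (1/ρ)
          ≤ Real.exp (1 - 1/ρ) * Real.exp (1/ρ - 1) :=
            mul_le_mul_of_nonneg_left h2 (Real.exp_pos _).le
        _ = 1 := h3
    rw [mul_one_div, div_le_one hρ0] at h4
    exact h4
  -- a ≤ exp(-5) * ρ
  have ha1 : a ≤ Real.exp (-5) * ρ := by
    have h5 : a = Real.exp (-5) * (Real.exp (1 - 1/ρ))^4 := by
      rw [ha_def, ← Real.exp_nat_mul, ← Real.exp_add]
      congr 1
      push_cast
      ring
    have h6 : (Real.exp (1 - 1/ρ))^4 ≤ ρ^4 := by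
      exact pow_le_pow_left₀ (Real.exp_pos _).le h1 4
    have h7 : ρ^4 ≤ ρ := by
      have := pow_le_pow_of_le_one hρ0.le hρ1 (show 1 ≤ 4 by norm_num)
      simpa using this
    rw [h5]
    nlinarith [Real.exp_pos (-5 : ℝ)]
  -- exp(-5) < 0.0068
  have e1 := Real.exp_one_gt_d9
  have hexp5 : (148:ℝ) < Real.exp 5 := by
    have h : Real.exp 5 = (Real.exp 1)^5 := by
      rw [← Real.exp_nat_mul]; norm_num
    rw [h]
    calc (148:ℝ) < 2.7182818283^5 := by norm_num
      _ < (Real.exp 1)^5 := by gcongr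
  have he5 : Real.exp (-5 : ℝ) < 0.0068 := by
    have hprod : Real.exp (-5 : ℝ) * Real.exp 5 = 1 := by
      rw [← Real.exp_add]; norm_num
    nlinarith [Real.exp_pos (-5 : ℝ), mul_lt_mul_of_pos_left hexp5 (Real.exp_pos (-5 : ℝ))]
  have hdρ : d ≤ 0.00687 * ρ := by nlinarith
  have hd_half : d < 1/2 := by nlinarith
  -- log 10 < 2.36
  have e2 : (7.389:ℝ) < Real.exp 2 := by
    have h : Real.exp 2 = (Real.exp 1)^2 := by
      rw [← Real.exp_nat_mul]; norm_num
    rw [h]; nlinarith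
  have hlog10 : Real.log 10 < 2.36 := by
    have hsplit : Real.log 10 = Real.log (10 / Real.exp 2) + 2 := by
      rw [Real.log_div (by norm_num) (Real.exp_ne_zero 2), Real.log_exp]; ring
    have h6 := Real.log_le_sub_one_of_pos (show (0:ℝ) < 10 / Real.exp 2 by positivity)
    have h7 : 10 / Real.exp 2 < 10/7.389 :=
      div_lt_div_of_pos_left (by norm_num) (by norm_num) e2
    rw [hsplit]
    nlinarith
  have hlog10_pos : 0 < Real.log 10 := Real.log_pos (by norm_num)
  -- log 2.02 < 0.7032
  have hlog202 : Real.log 2.02 < 0.7032 := by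
    have h202 : (2.02:ℝ) = 2 * 1.01 := by norm_num
    rw [h202, Real.log_mul two_ne_zero (by norm_num)]
    have hl2 := Real.log_two_lt_d9
    have hl101 := Real.log_le_sub_one_of_pos (show (0:ℝ) < 1.01 by norm_num)
    nlinarith
  have hlog202_pos : 0 < Real.log 2.02 := Real.log_pos (by norm_num)
  -- log(1/(2d)) = 1 + 4/ρ - log 2.02
  have hL : Real.log (1/(2*d)) = 1 + 4/ρ - Real.log 2.02 := by
    have h2d : 2*d = 2.02 * a := by rw [hd_def]; ring
    rw [one_div, Real.log_inv, h2d, Real.log_mul (by norm_num) ha_pos.ne', ha_def,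
      Real.log_exp]
    ring
  have h4ρ : 4 ≤ 4/ρ := by rw [le_div_iff₀ hρ0]; nlinarith
  have hLpos : 0 < Real.log (1/(2*d)) := by rw [hL]; linarith
  -- rpow bound
  have hrpow : (10:ℝ)^(2*d) = Real.exp (Real.log 10 * (2*d)) :=
    Real.rpow_def_of_pos (by norm_num) _
  set t := Real.log 10 * (2*d) with ht_def
  have ht_pos : 0 ≤ t := by positivity
  have ht_small : t ≤ 0.0325 * ρ := by
    have h8 : Real.log 10 * (2*d) ≤ 2.36 * (2*d) :=
      mul_le_mul_of_nonneg_right hlog10.le (by positivity)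
    nlinarith
  have ht' : t ≤ 0.0325 := by nlinarith
  have h10 : (0:ℝ) < 1 - t := by linarith
  have h11 : Real.exp t * (1 - t) ≤ 1 := by
    have h8 : 1 - t ≤ Real.exp (-t) := by
      have := Real.add_one_le_exp (-t); linarith
    have h9 : Real.exp t * Real.exp (-t) = 1 := by
      rw [← Real.exp_add]; norm_num
    nlinarith [mul_le_mul_of_nonneg_left h8 (Real.exp_pos t).le]
  have hE : Real.exp t ≤ 1.04 := by
    nlinarith [mul_le_mul_of_nonneg_left ht' (Real.exp_pos t).le]
  have hEt : Real.exp t * t ≤ 1.04 * (0.0325 * ρ) :=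
    mul_le_mul hE ht_small ht_pos (by norm_num)
  -- main inequality
  have hmain : (4 + d) * (10:ℝ)^(2*d) / Real.log (1/(2*d)) < ρ := by
    rw [div_lt_iff₀ hLpos, hL]
    have hρL : ρ * (1 + 4/ρ - Real.log 2.02) = ρ + 4 - ρ * Real.log 2.02 := by
      field_simp
    rw [hρL, hrpow]
    have hplog : ρ * Real.log 2.02 ≤ ρ * 0.7032 :=
      mul_le_mul_of_nonneg_left hlog202.le hρ0.le
    have hdE : d * Real.exp t ≤ (0.00687*ρ) * 1.04 :=
      mul_le_mul hdρ hE (Real.exp_pos t).le (by positivity)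
    nlinarith [h11, hEt, Real.exp_pos t]
  have hmem : d ∈ {δ : ℝ | δ ∈ Set.Ioo (0 : ℝ) (1/2) ∧
      (4 + δ) * (10 : ℝ) ^ (2 * δ) / Real.log (1 / (2 * δ)) < ρ} :=
    ⟨⟨hd_pos, hd_half⟩, hmain⟩
  have hbdd : BddAbove {δ : ℝ | δ ∈ Set.Ioo (0 : ℝ) (1/2) ∧
      (4 + δ) * (10 : ℝ) ^ (2 * δ) / Real.log (1 / (2 * δ)) < ρ} :=
    ⟨1/2, fun x hx => hx.1.2.le⟩
  have hle : d ≤ sSup {δ : ℝ | δ ∈ Set.Ioo (0 : ℝ) (1/2) ∧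
      (4 + δ) * (10 : ℝ) ^ (2 * δ) / Real.log (1 / (2 * δ)) < ρ} :=
    le_csSup hbdd hmem
  nlinarith
end

section
/- Let f : ℤ → ℤ be a nonconstant polynomial function. Suppose that for every sufficiently large real x there exist arbitrarily large integers n ≥ 0 such that each of f(n+1), …, f(n+⌊2x⌋) has a prime factor p with deg f < p ≤ x. Then there exists an integer G ≥ 2 such that for every integer k ≥ G there are infinitely many n ≥ 0 with the property that none of f(n+1), …, f(n+k) is coprime to the product of the others. -/
open Polynomial Finset

noncomputable def dP (F : Polynomial ℚ) : Polynomial ℚ := F.comp (X + 1) - F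

lemma dP_zero : dP 0 = 0 := by simp [dP]

lemma natDegree_dP_lt {F : Polynomial ℚ} (h : 1 ≤ F.natDegree) :
    (dP F).natDegree < F.natDegree := by
  have hF : F ≠ 0 := fun h0 => by simp [h0] at h
  have h1 : (X + 1 : Polynomial ℚ) = X + C 1 := by simp
  have hnd : (F.comp (X + 1)).natDegree = F.natDegree := by
    rw [h1, natDegree_comp, natDegree_X_add_C, mul_one]
  have hcomp : F.comp (X + 1) ≠ 0 := by
    intro h0
    rw [h0, natDegree_zero] at hnd
    omega
  have hdeg : (F.comp (X + 1)).degree = F.degree := by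
    rw [degree_eq_natDegree hcomp, degree_eq_natDegree hF, hnd]
  have hlc : (F.comp (X + 1)).leadingCoeff = F.leadingCoeff := by
    rw [h1, leadingCoeff_comp (by rw [natDegree_X_add_C]; norm_num)]
    rw [leadingCoeff_X_add_C, one_pow, mul_one]
  have h2 := degree_sub_lt hdeg hcomp hlc
  rw [hdeg] at h2
  by_cases h0 : dP F = 0
  · rw [h0, natDegree_zero]; omega
  · exact natDegree_lt_natDegree h0 (by rwa [dP])

lemma dP_iterate : ∀ (e : ℕ) (F : Polynomial ℚ), F.natDegree < e → dP^[e] F = 0 := by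
  intro e
  induction e with
  | zero => intro F h; omega
  | succ e ih =>
    intro F h
    rw [Function.iterate_succ_apply]
    by_cases h0 : F.natDegree = 0
    · have hd : dP F = 0 := by
        obtain ⟨c, rfl⟩ := natDegree_eq_zero.mp h0
        simp [dP]
      rw [hd]
      exact Function.iterate_fixed dP_zero e
    · exact ih _ (lt_of_lt_of_le (natDegree_dP_lt (by omega)) (by omega))

def Dop : AddMonoid.End (ℤ → ℤ) :=
  AddMonoidHom.mk' (fun g => fun m => g (m + 1) - g m) (by
    intro a b; funext m; simp [Pi.add_apply]; ring)

lemma Dop_apply (g : ℤ → ℤ) (m : ℤ) : Dop g m = g (m + 1) - g m := rfl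

lemma one_add_D_pow (s : ℕ) : ∀ (g : ℤ → ℤ) (m : ℤ), ((1 + Dop) ^ s) g m = g (m + s) := by
  induction s with
  | zero => intro g m; simp
  | succ s ih =>
    intro g m
    rw [pow_succ]
    have h1 : ((1 + Dop) ^ s * (1 + Dop)) g m = ((1 + Dop) ^ s) ((1 + Dop) g) m := rfl
    have h2 : (1 + Dop) g = fun t => g (t + 1) := by
      funext t
      show (1 : AddMonoid.End (ℤ → ℤ)) g t + Dop g t = g (t + 1)
      simp [Dop_apply]
    rw [h1, h2, ih]
    push_cast
    ring_nf

lemma Dpow_eval (f : ℤ → ℤ) (F : Polynomial ℚ) (heval : ∀ n : ℤ, (f n : ℚ) = F.eval (n : ℚ)) :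
    ∀ (j : ℕ) (m : ℤ), (((Dop ^ j) f m : ℤ) : ℚ) = (dP^[j] F).eval (m : ℚ) := by
  intro j
  induction j with
  | zero => intro m; simpa using heval m
  | succ j ih =>
    intro m
    rw [pow_succ']
    have h1 : (Dop * Dop ^ j) f m = (Dop ^ j) f (m + 1) - (Dop ^ j) f m := rfl
    rw [Function.iterate_succ_apply', dP, eval_sub, eval_comp, h1, Int.cast_sub, ih, ih]
    push_cast
    simp

lemma Dpow_zero (f : ℤ → ℤ) (F : Polynomial ℚ) (heval : ∀ n : ℤ, (f n : ℚ) = F.eval (n : ℚ))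
    {j : ℕ} (hj : F.natDegree < j) (m : ℤ) : (Dop ^ j) f m = 0 := by
  have := Dpow_eval f F heval j m
  rw [dP_iterate j F hj] at this
  simp at this
  exact this

lemma taylor_sum (f : ℤ → ℤ) (p : ℕ) (m : ℤ) :
    f (m + p) = ∑ k ∈ Finset.range (p + 1), (p.choose k : ℤ) * (Dop ^ k) f m := by
  have h := one_add_D_pow p f m
  rw [add_comm (1 : AddMonoid.End (ℤ → ℤ)) Dop, (Commute.one_right Dop).add_pow p] at h
  rw [← h]
  rw [show ∀ (s : Finset ℕ) (g : ℕ → AddMonoid.End (ℤ → ℤ)), (∑ i ∈ s, g i) f = ∑ i ∈ s, g i f from fun s g => by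
    induction s using Finset.cons_induction with
    | empty => rfl
    | cons a s ha ih => rw [Finset.sum_cons, Finset.sum_cons, ← ih]; rfl]
  rw [Finset.sum_apply]
  apply Finset.sum_congr rfl
  intro k hk
  rw [one_pow, mul_one, ← (Nat.cast_commute (p.choose k) (Dop ^ k)).eq]
  have h2 : ((p.choose k : AddMonoid.End (ℤ → ℤ)) * Dop ^ k) f m
      = (p.choose k : AddMonoid.End (ℤ → ℤ)) ((Dop ^ k) f) m := rfl
  rw [h2, AddMonoid.End.natCast_apply]
  simp [mul_comm]

lemma periodic_mod (f : ℤ → ℤ) (F : Polynomial ℚ) (heval : ∀ n : ℤ, (f n : ℚ) = F.eval (n : ℚ))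
    {p : ℕ} (hp : p.Prime) (hdp : F.natDegree < p) (m : ℤ) :
    (p : ℤ) ∣ f (m + p) - f m := by
  have ht := taylor_sum f p m
  rw [Finset.sum_range_succ'] at ht
  have h0 : (p.choose 0 : ℤ) * (Dop ^ 0) f m = f m := by simp
  rw [h0] at ht
  have heq : f (m + p) - f m
      = ∑ k ∈ Finset.range p, (p.choose (k + 1) : ℤ) * (Dop ^ (k + 1)) f m := by
    omega
  rw [heq]
  apply Finset.dvd_sum
  intro k hk
  rcases eq_or_lt_of_le (Nat.succ_le_of_lt (Finset.mem_range.mp hk)) with hkp | hkp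
  · have hkp' : k + 1 = p := hkp
    rw [Dpow_zero f F heval (hkp' ▸ hdp) m, mul_zero]
    exact dvd_zero _
  · exact Dvd.dvd.mul_right
      (Int.natCast_dvd_natCast.mpr (hp.dvd_choose_self (Nat.succ_ne_zero k) hkp)) _


theorem stmt_14 (f : ℤ → ℤ) (F : Polynomial ℚ) (hdeg : 1 ≤ F.natDegree)
    (heval : ∀ n : ℤ, (f n : ℚ) = F.eval (n : ℚ))
    (hyp : ∃ x₁ : ℝ, ∀ x : ℝ, x₁ ≤ x → ∀ N : ℕ, ∃ n : ℕ, N ≤ n ∧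
      ∀ i ∈ Finset.Icc 1 ⌊2 * x⌋₊, ∃ p : ℕ, p.Prime ∧
        (F.natDegree : ℝ) < p ∧ (p : ℝ) ≤ x ∧ (p : ℤ) ∣ f ((n : ℤ) + i)) :
    ∃ G : ℕ, 2 ≤ G ∧ ∀ k : ℕ, G ≤ k → ∀ N : ℕ, ∃ n : ℕ, N ≤ n ∧
      ∀ i ∈ Finset.Icc 1 k, ∃ j ∈ Finset.Icc 1 k, j ≠ i ∧
        1 < Int.gcd (f ((n : ℤ) + i)) (f ((n : ℤ) + j)) := by
  obtain ⟨x₁, hx₁⟩ := hyp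
  have hF : F ≠ 0 := fun h0 => by simp [h0] at hdeg
  have hfin : {m : ℤ | f m = 0}.Finite := by
    have hq : {x : ℚ | F.IsRoot x}.Finite := Polynomial.finite_setOf_isRoot hF
    have hpre : ((Int.cast : ℤ → ℚ) ⁻¹' {x : ℚ | F.IsRoot x}).Finite :=
      hq.preimage (Int.cast_injective.injOn)
    apply hpre.subset
    intro m hm
    simp only [Set.mem_preimage, Set.mem_setOf_eq, Polynomial.IsRoot.def]
    rw [← heval m]
    exact_mod_cast hm
  obtain ⟨M, hM⟩ := hfin.bddAbove
  have hne : ∀ m : ℤ, M < m → f m ≠ 0 := fun m hm h0 =>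
    absurd (hM (show m ∈ {m : ℤ | f m = 0} from h0)) (not_le.mpr hm)
  refine ⟨max 2 ⌈2 * x₁⌉₊, le_max_left _ _, ?_⟩
  intro k hk N
  have hk2 : 2 ≤ k := le_trans (le_max_left _ _) hk
  have hkc : ⌈2 * x₁⌉₊ ≤ k := le_trans (le_max_right _ _) hk
  have hxk : x₁ ≤ (k : ℝ) / 2 := by
    have h1 : 2 * x₁ ≤ (⌈2 * x₁⌉₊ : ℝ) := Nat.le_ceil _
    have h2 : ((⌈2 * x₁⌉₊ : ℕ) : ℝ) ≤ (k : ℝ) := Nat.cast_le.mpr hkc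
    linarith
  obtain ⟨n, hnN, hn⟩ := hx₁ ((k : ℝ) / 2) hxk (max N (M.toNat + 1))
  have hfloor : ⌊2 * ((k : ℝ) / 2)⌋₊ = k := by
    rw [show 2 * ((k : ℝ) / 2) = (k : ℝ) by ring, Nat.floor_natCast]
  refine ⟨n, le_trans (le_max_left _ _) hnN, ?_⟩
  have hnM : M < (n : ℤ) := by
    have h1 : M.toNat + 1 ≤ n := le_trans (le_max_right _ _) hnN
    have h2 : M ≤ (M.toNat : ℤ) := Int.self_le_toNat M
    have h3 : ((M.toNat + 1 : ℕ) : ℤ) ≤ (n : ℤ) := Int.ofNat_le.mpr h1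
    push_cast at h3
    omega
  intro i hi
  rw [hfloor] at hn
  obtain ⟨hi1, hik⟩ := Finset.mem_Icc.mp hi
  obtain ⟨p, hp, hpd, hpk, hpdvd⟩ := hn i hi
  have hdlt : F.natDegree < p := by exact_mod_cast hpd
  have h2p : 2 * p ≤ k := by
    have h1 : ((2 * p : ℕ) : ℝ) ≤ (k : ℝ) := by push_cast; linarith
    exact_mod_cast h1
  have hp2 := hp.two_le
  have hfne : f ((n : ℤ) + i) ≠ 0 := by
    apply hne
    have : (1 : ℤ) ≤ (i : ℤ) := by exact_mod_cast hi1
    omega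
  have gcd_gt : ∀ b : ℤ, (p : ℤ) ∣ b → 1 < Int.gcd (f ((n : ℤ) + i)) b := by
    intro b hb
    have hdv : (p : ℤ) ∣ (Int.gcd (f ((n : ℤ) + i)) b : ℤ) := Int.dvd_coe_gcd hpdvd hb
    have hdvn : p ∣ Int.gcd (f ((n : ℤ) + i)) b := Int.ofNat_dvd.mp hdv
    have hgne : Int.gcd (f ((n : ℤ) + i)) b ≠ 0 := fun h0 =>
      hfne (Int.gcd_eq_zero_iff.mp h0).1
    have := Nat.le_of_dvd (Nat.pos_of_ne_zero hgne) hdvn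
    omega
  by_cases hcase : i + p ≤ k
  · refine ⟨i + p, Finset.mem_Icc.mpr ⟨by omega, hcase⟩, by omega, ?_⟩
    apply gcd_gt
    have hper := periodic_mod f F heval hp hdlt ((n : ℤ) + i)
    have hc : ((n : ℤ) + ((i + p : ℕ) : ℤ)) = ((n : ℤ) + i + p) := by push_cast; ring
    rw [hc]
    simpa using dvd_add hper hpdvd
  · refine ⟨i - p, Finset.mem_Icc.mpr ⟨by omega, by omega⟩, by omega, ?_⟩
    apply gcd_gt
    have hplei : p ≤ i := by omega
    have hper := periodic_mod f F heval hp hdlt ((n : ℤ) + i - p)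
    have hc : ((n : ℤ) + ((i - p : ℕ) : ℤ)) = ((n : ℤ) + i - p) := by
      rw [Nat.cast_sub hplei]; ring
    rw [hc]
    have he : (n : ℤ) + i - p + p = (n : ℤ) + i := by ring
    rw [he] at hper
    simpa using dvd_sub hpdvd hper
end
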